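/- If a projective plane of order s contains a maximal {ds-s+d, d}-arc with 1 < d < s, then d divides s. -/

import Mathlib

open Configuration

/-- If a projective plane of order `s` contains a maximal `{ds-s+d, d}`-arc with
`1 < d < s`, then `d` divides `s`. -/
theorem stmt14 (P L : Type*) [Membership P L] [ProjectivePlane P L] [Fintype P] [Fintype L]
    (d : ℕ) (hd1 : 1 < d) (hds : d < ProjectivePlane.order P L)
    (K : Finset P) (hK0 : K.Nonempty)
    (hcard : K.card
      = d * ProjectivePlane.order P L - ProjectivePlane.order P L + d)
    (hK : ∀ l : L, ({p : P | p ∈ K ∧ p ∈ l}).ncard = 0 ∨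
      ({p : P | p ∈ K ∧ p ∈ l}).ncard = d) :
    d ∣ ProjectivePlane.order P L := by
  classical
  set s := ProjectivePlane.order P L with hs
  -- K is not all of P
  have hcardP : Fintype.card P = s ^ 2 + s + 1 := ProjectivePlane.card_points P L
  have hKlt : K.card < Fintype.card P := by
    rw [hcard, hcardP]
    have hds' : d + 1 ≤ s := hds
    have h1 : d * s - s + d ≤ d * s + d := by omega
    have h2 : d * s + d = d * (s + 1) := by ring
    have h3 : d * (s + 1) ≤ (s - 1) * (s + 1) :=
      Nat.mul_le_mul_right _ (by omega)
    have h4 : (s - 1) * (s + 1) < s ^ 2 + s + 1 := by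
      have : (s - 1) * (s + 1) ≤ s * (s + 1) := Nat.mul_le_mul_right _ (by omega)
      nlinarith [sq_nonneg s]
    omega
  have hKne : (K : Finset P) ≠ Finset.univ := by
    intro h
    rw [h, Finset.card_univ] at hKlt
    exact lt_irrefl _ hKlt
  obtain ⟨x, hx⟩ : ∃ x : P, x ∉ K := by
    by_contra h
    push_neg at h
    exact hKne (Finset.eq_univ_iff_forall.mpr h)
  obtain ⟨p₀, hp₀⟩ := hK0
  have hp₀x : p₀ ≠ x := fun h => hx (h ▸ hp₀)
  haveI : Nonempty L := ⟨HasLines.mkLine hp₀x⟩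
  -- the line through p and x
  let f : P → L := fun p => if h : p ≠ x then HasLines.mkLine h else Classical.arbitrary L
  have hf : ∀ p ∈ K, p ∈ f p ∧ x ∈ f p := by
    intro p hp
    have hpx : p ≠ x := fun h => hx (h ▸ hp)
    simp only [f, dif_pos hpx]
    exact HasLines.mkLine_ax hpx
  have hdvd : ∀ l : L, d ∣ (K.filter (fun p => p ∈ l)).card := by
    intro l
    have : ({p : P | p ∈ K ∧ p ∈ l}).ncard = (K.filter (fun p => p ∈ l)).card := by
      rw [show {p : P | p ∈ K ∧ p ∈ l} = ↑(K.filter (fun p => p ∈ l)) by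
        ext p; simp]
      exact Set.ncard_coe_finset _
    rcases hK l with h | h <;> rw [this] at h <;> rw [h] <;> simp
  -- fiberwise count
  have hsum : K.card = ∑ l ∈ Finset.univ.filter (fun l : L => x ∈ l),
      (K.filter (fun p => f p = l)).card := by
    apply Finset.card_eq_sum_card_fiberwise
    intro p hp
    simp only [Finset.mem_coe, Finset.mem_filter, Finset.mem_univ, true_and]
    exact (hf p hp).2
  have hfiber : ∀ l ∈ Finset.univ.filter (fun l : L => x ∈ l),
      K.filter (fun p => f p = l) = K.filter (fun p => p ∈ l) := by
    intro l hl
    have hxl : x ∈ l := by simpa using hl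
    ext p
    simp only [Finset.mem_filter]
    constructor
    · rintro ⟨hp, rfl⟩
      exact ⟨hp, (hf p hp).1⟩
    · rintro ⟨hp, hpl⟩
      refine ⟨hp, ?_⟩
      have hpx : p ≠ x := fun h => hx (h ▸ hp)
      rcases Nondegenerate.eq_or_eq (l₁ := f p) (l₂ := l) (hf p hp).1 (hf p hp).2 hpl hxl with
        h | h
      · exact absurd h hpx
      · exact h
  have hdK : d ∣ K.card := by
    rw [hsum]
    apply Finset.dvd_sum
    intro l hl
    rw [hfiber l hl]
    exact hdvd l
  -- conclude
  rw [hcard] at hdK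
  have h1 : d ∣ d * (s + 1) := Dvd.intro _ rfl
  have h2 : d ∣ d * (s + 1) - (d * s - s + d) := Nat.dvd_sub h1 hdK
  have hsk : s ≤ d * s := Nat.le_mul_of_pos_left _ (by omega)
  have : d * (s + 1) - (d * s - s + d) = s := by
    have : d * (s + 1) = d * s + d := by ring
    omega
  rwa [this] at h2
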